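/- Let T be a tilting A-module and B = End_A(T). Let 0→M→X'→(p) N→0 be a short exact sequence in mod A with Ext^1_A(N,T)=0, and let L be in mod A with Ext^1_A(L,M)=0. If θ_{L,X'} and θ_{L,N} are bijective, then the map Hom_B(X'_T, L_T) → Hom_B(N_T, L_T), f ↦ f∘p_T, induced by composition with p_T = Hom_A(p,T) : N_T → X'_T, is surjective. -/

import Mathlib

open CategoryTheory

section Defs

variable (R : Type) [Ring R]

/-- `M` belongs to `add T`: `M` is a direct summand of a finite direct power of `T`. -/
def InAdd (T M : Type) [AddCommGroup T] [Module R T] [AddCommGroup M] [Module R M] : Prop :=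
  ∃ (n : ℕ) (ι : M →ₗ[R] (Fin n → T)) (ρ : (Fin n → T) →ₗ[R] M), ρ.comp ι = LinearMap.id

/-- `M` is indecomposable: it is nonzero and not the direct sum of two nonzero submodules. -/
def IsIndec (M : Type) [AddCommGroup M] [Module R M] : Prop :=
  Nontrivial M ∧ ∀ p q : Submodule R M, IsCompl p q → p = ⊥ ∨ q = ⊥

/-- `M` is basic: it is the direct sum of pairwise non-isomorphic indecomposable modules. -/
def IsBasic (M : Type) [AddCommGroup M] [Module R M] : Prop :=
  ∃ (n : ℕ) (N : Fin n → Submodule R M), DirectSum.IsInternal N ∧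
    (∀ i, IsIndec R (N i)) ∧ ∀ i j : Fin n, i ≠ j → IsEmpty ((N i) ≃ₗ[R] (N j))

/-- Vanishing of the `i`-th Ext group `Ext^i(X,Y)` between two modules. -/
def ExtVanish (i : ℕ) (X Y : ModuleCat.{0} R) : Prop :=
  Limits.IsZero ((((_root_.Ext ℤ (ModuleCat.{0} R) i).obj (Opposite.op X)).obj Y))

/-- Projective dimension at most `n`, defined recursively via syzygies. -/
def pdLE {C : Type*} [Category C] [Abelian C] : ℕ → C → Prop
  | 0, M => Projective M
  | (n + 1), M => ∃ (P : C) (π : P ⟶ M), Epi π ∧ Projective P ∧ pdLE n (Limits.kernel π)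

/-- Existence of a coresolution `0 → M → T¹ → ⋯ → Tʳ → 0` of length `≤ n`
with all `Tʲ` in `add T`. -/
def CoresLE (T : Type) [AddCommGroup T] [Module R T] : ℕ → ModuleCat.{0} R → Prop
  | 0, M => InAdd R T M
  | (n + 1), M => ∃ (X : ModuleCat.{0} R) (f : M ⟶ X),
      Mono f ∧ InAdd R T X ∧ CoresLE T n (Limits.cokernel f)

/-- `T` is a tilting module: it lies in `mod R`, has finite projective dimension,
is selforthogonal, and `R` admits a finite coresolution by modules in `add T`. -/
def IsTilting (T : Type) [AddCommGroup T] [Module R T] : Prop :=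
  Module.Finite R T ∧
  (∃ n, pdLE n (ModuleCat.of R T)) ∧
  (∀ i : ℕ, 1 ≤ i → ExtVanish R i (ModuleCat.of R T) (ModuleCat.of R T)) ∧
  (∃ r, CoresLE R T r (ModuleCat.of R R))

/-- A vertex of the Hasse quiver `K_R`: a basic tilting module. -/
def IsBasicTilting (M : ModuleCat.{0} R) : Prop :=
  IsBasic R M ∧ IsTilting R M

/-- An arrow `M → N` in the Hasse quiver of basic tilting modules:
`M ≅ X ⊕ T̄`, `N ≅ Y ⊕ T̄` with `X`, `Y` indecomposable, and there is a non-split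
short exact sequence `0 → X → E → Y → 0` with `E ∈ add T̄`. -/
def HasseArrow (M N : ModuleCat.{0} R) : Prop :=
  IsBasicTilting R M ∧ IsBasicTilting R N ∧
  ∃ X Y E Tbar : ModuleCat.{0} R,
    IsIndec R X ∧ IsIndec R Y ∧
    Nonempty (M ≃ₗ[R] (X × Tbar)) ∧ Nonempty (N ≃ₗ[R] (Y × Tbar)) ∧
    InAdd R Tbar E ∧
    ∃ (ι : X →ₗ[R] E) (π : E →ₗ[R] Y),
      Function.Injective ι ∧ Function.Surjective π ∧ Function.Exact ι π ∧
      ¬ ∃ r : E →ₗ[R] X, r.comp ι = LinearMap.id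

/-- There is an oriented path (possibly of length 0, and up to isomorphism)
from `M` to `N` in the Hasse quiver: `M` is a predecessor of `N`. -/
def HassePath (M N : ModuleCat.{0} R) : Prop :=
  Relation.ReflTransGen
    (fun (P Q : ModuleCat.{0} R) => Nonempty (↥P ≃ₗ[R] ↥Q) ∨ HasseArrow R P Q) M N

/-- `R` (as an algebra) is connected: its only central idempotents are `0` and `1`. -/
def IsConnectedRing : Prop :=
  ∀ e : R, IsIdempotentElem e → (∀ a, a * e = e * a) → e = 0 ∨ e = 1

section Theta

variable (T : Type) [AddCommGroup T] [Module R T]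

/-- The map `θ_{X,Y} : Hom_A(X,Y) → Hom_B(Hom_A(Y,T), Hom_A(X,T))`, `u ↦ Hom_A(u,T)`,
where `B = End_A(T)` acts on `Hom_A(-,T)` by composition. -/
def thetaMap (X Y : Type) [AddCommGroup X] [Module R X] [AddCommGroup Y] [Module R Y]
    (u : X →ₗ[R] Y) : (Y →ₗ[R] T) →ₗ[Module.End R T] (X →ₗ[R] T) where
  toFun f := f.comp u
  map_add' _ _ := LinearMap.add_comp _ _ _
  map_smul' _ _ := rfl

/-- The evaluation map `X → Hom_B(Hom_A(X,T), T)`, `x ↦ (f ↦ f x)`,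
as an `A`-linear map, where `B = End_A(T)`. -/
def evalMap (X : Type) [AddCommGroup X] [Module R X] :
    X →ₗ[R] ((X →ₗ[R] T) →ₗ[Module.End R T] T) where
  toFun x :=
    { toFun := fun f => f x
      map_add' := fun _ _ => rfl
      map_smul' := fun _ _ => rfl }
  map_add' x y := by ext f; exact f.map_add x y
  map_smul' a x := by ext f; exact f.map_smul a x

end Theta

/-- Right multiplication by `x`, as an endomorphism of the left regular module. -/
def rightMulLin (x : R) : R →ₗ[R] R where
  toFun a := a * x
  map_add' a b := add_mul a b x
  map_smul' a b := by simp [smul_eq_mul, mul_assoc]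

/-- `e` is a primitive idempotent. -/
def IsPrimitiveIdem (e : R) : Prop :=
  IsIdempotentElem e ∧ e ≠ 0 ∧
    ∀ f g : R, IsIdempotentElem f → IsIdempotentElem g → f * g = 0 → g * f = 0 →
      f + g = e → f = 0 ∨ g = 0

/-- `e 0, …, e (n-1)` is a complete set of pairwise orthogonal primitive idempotents. -/
def IsCompleteOrthPrimIdems {n : ℕ} (e : Fin n → R) : Prop :=
  (∑ i, e i) = 1 ∧ (∀ i j : Fin n, i ≠ j → e i * e j = 0) ∧ ∀ i, IsPrimitiveIdem R (e i)

variable (k : Type) [Field k]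

/-- The twisted module `N^ψ` (same underlying group, action `a * m = ψ a • m`) is
isomorphic to `N` as a module: there is an additive bijection `φ : N → N`
which is linear from `N^ψ` to `N`. -/
def TwistIso [Algebra k R] (ψ : R ≃ₐ[k] R) (N : Type) [AddCommGroup N] [Module R N] : Prop :=
  ∃ φ : N ≃+ N, ∀ (a : R) (m : N), φ (ψ a • m) = a • φ m

/-- Condition `(H_{A,T})`: for every `k`-algebra automorphism `ψ` of `A` fixing each of the
idempotents `e i` and every direct summand `N` of `T`, one has `N^ψ ≅ N`. -/
def CondH [Algebra k R] {n : ℕ} (e : Fin n → R)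
    (T : Type) [AddCommGroup T] [Module R T] : Prop :=
  ∀ ψ : R ≃ₐ[k] R, (∀ i, ψ (e i) = e i) →
    ∀ N : ModuleCat.{0} R,
      (∃ (ι : ↥N →ₗ[R] T) (ρ : T →ₗ[R] ↥N), ρ.comp ι = LinearMap.id) →
      TwistIso R k ψ ↥N

end Defs

open CategoryTheory Limits in
lemma lift_of_extvanish (A : Type) [Ring A]
    (M X' N L : Type) [AddCommGroup M] [Module A M] [AddCommGroup X'] [Module A X']
    [AddCommGroup N] [Module A N] [AddCommGroup L] [Module A L]
    (i : M →ₗ[A] X') (p : X' →ₗ[A] N)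
    (hi : Function.Injective i) (hp : Function.Surjective p) (hip : Function.Exact i p)
    (hextL : ExtVanish A 1 (ModuleCat.of A L) (ModuleCat.of A M))
    (v : L →ₗ[A] N) : ∃ u : L →ₗ[A] X', p.comp u = v := by
  classical
  let C := ModuleCat.{0} A
  let P : ProjectiveResolution (ModuleCat.of A L) := ProjectiveResolution.of _
  let Q := P.complex.linearYonedaObj ℤ (ModuleCat.of A M)
  have hz : IsZero (Q.homology 1) :=
    hextL.of_iso (P.isoExt 1 (ModuleCat.of A M)).symm
  have hex : (Q.sc' 0 1 2).Exact := by
    rw [← Q.exactAt_iff' 0 1 2 (by simp) (by simp)]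
    exact (Q.exactAt_iff_isZero_homology 1).2 hz
  -- the epi p as a morphism in C
  let pC : ModuleCat.of A X' ⟶ ModuleCat.of A N := ModuleCat.ofHom p
  haveI : Epi pC := (ModuleCat.epi_iff_surjective pC).2 hp
  let π0 : P.complex.X 0 ⟶ ModuleCat.of A L := P.π.f 0
  let vC : ModuleCat.of A L ⟶ ModuleCat.of A N := ModuleCat.ofHom v
  let w : P.complex.X 0 ⟶ ModuleCat.of A X' := Projective.factorThru (π0 ≫ vC) pC
  have hw : w ≫ pC = π0 ≫ vC := Projective.factorThru_comp _ _
  have hd1π : P.complex.d 1 0 ≫ π0 = 0 := P.complex_d_comp_π_f_zero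
  set d1 := P.complex.d 1 0 with hd1
  set d2 := P.complex.d 2 1 with hd2
  have hmem : ∀ x : P.complex.X 1, w (d1 x) ∈ LinearMap.range i := by
    intro x
    have h0 : p (w (d1 x)) = 0 := by
      have := congrArg (fun f => (d1 ≫ f) x) hw
      change p (w (d1 x)) = v (π0 (d1 x)) at this
      have hπ : π0 (d1 x) = 0 := congrArg (fun f => f x) hd1π
      calc p (w (d1 x)) = v (π0 (d1 x)) := this
        _ = 0 := by rw [hπ]; exact v.map_zero
    exact (hip _).1 h0
  let e : M ≃ₗ[A] LinearMap.range i := LinearEquiv.ofInjective i hi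
  let wd1 : P.complex.X 1 →ₗ[A] X' := (w.hom : (P.complex.X 0 : Type) →ₗ[A] X').comp d1.hom
  let c : P.complex.X 1 →ₗ[A] M :=
    e.symm.toLinearMap.comp (LinearMap.codRestrict (LinearMap.range i) wd1 hmem)
  have hic : ∀ x, i (c x) = w (d1 x) := by
    intro x
    have h1 : e (c x) = ⟨wd1 x, hmem x⟩ := e.apply_symm_apply _
    have h2 : (e (c x) : X') = i (c x) := LinearEquiv.ofInjective_apply i (c x)
    have := congrArg (Subtype.val) h1
    rw [h2] at this
    exact this
  -- c is a cocycle
  have hcd2 : (c.comp d2.hom : P.complex.X 2 →ₗ[A] M) = 0 := by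
    apply LinearMap.ext; intro x
    apply hi
    have hdd : d1 (d2 x) = 0 := by
      have h := P.complex.d_comp_d 2 1 0
      calc d1 (d2 x) = (d2 ≫ d1) x := rfl
        _ = (0 : P.complex.X 2 ⟶ P.complex.X 0) x := by rw [h]
        _ = 0 := rfl
    simp only [LinearMap.comp_apply, LinearMap.zero_apply, map_zero]
    rw [hic (d2 x), hdd, map_zero]
  -- view c as a cocycle in the Yoneda complex and use exactness
  have hg : (Q.sc' 0 1 2).g (ModuleCat.ofHom c) = 0 := by
    have h1 : (Q.sc' 0 1 2).g (ModuleCat.ofHom c) = (d2 ≫ (ModuleCat.ofHom c : P.complex.X 1 ⟶ ModuleCat.of A M)) := rfl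
    rw [h1]
    exact ModuleCat.hom_ext hcd2
  obtain ⟨b0, hb⟩ := (ShortComplex.moduleCat_exact_iff _).1 hex (ModuleCat.ofHom c) hg
  -- b : P.complex.X 0 ⟶ ModuleCat.of A M with d1 ≫ b = c
  let b : P.complex.X 0 ⟶ ModuleCat.of A M := b0
  have hb' : (d1 ≫ b : P.complex.X 1 ⟶ ModuleCat.of A M) = ModuleCat.ofHom c := hb
  have hbx : ∀ x : P.complex.X 1, b (d1 x) = c x := by
    intro x
    exact congrArg (fun f : (P.complex.X 1 ⟶ ModuleCat.of A M) => f x) hb' 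
  let iC : ModuleCat.of A M ⟶ ModuleCat.of A X' := ModuleCat.ofHom i
  let w' : P.complex.X 0 ⟶ ModuleCat.of A X' :=
    w - (b ≫ iC)
  have hw'0 : d1 ≫ w' = 0 := by
    apply ModuleCat.hom_ext
    apply LinearMap.ext
    intro x
    have : (d1 ≫ w') x = (w (d1 x) - iC (b (d1 x))) := rfl
    have hiC : iC (c x) = w (d1 x) := hic x
    rw [this, hbx x, hiC, sub_self]
    rfl
  let u : ModuleCat.of A L ⟶ ModuleCat.of A X' := P.exact₀.desc w' hw'0
  have hu : π0 ≫ u = w' := P.exact₀.g_desc w' hw'0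
  refine ⟨u.hom, ?_⟩
  apply LinearMap.ext
  intro l
  have hπ0surj : Function.Surjective π0 :=
    (ModuleCat.epi_iff_surjective π0).1 (inferInstance : Epi (P.π.f 0))
  obtain ⟨x, hx⟩ := hπ0surj l
  have hux : u (π0 x) = w' x := congrArg (fun f : (P.complex.X 0 ⟶ ModuleCat.of A X') => f x) hu
  have hw'x : (w' : P.complex.X 0 ⟶ ModuleCat.of A X') x = (w x - iC (b x)) := rfl
  have hpw : p (w x) = v (π0 x) := congrArg (fun f : (P.complex.X 0 ⟶ ModuleCat.of A N) => f x) hw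
  have hpi : p (iC (b x)) = 0 := hip.apply_apply_eq_zero _
  calc (p.comp u.hom) l = p (u (π0 x)) := by rw [hx]; rfl
    _ = p ((w x - iC (b x))) := by rw [hux, hw'x]
    _ = p (w x) - p (iC (b x)) := map_sub p _ _
    _ = v (π0 x) := by rw [hpw, hpi, sub_zero]
    _ = v l := by rw [hx]


/-- Let `T` be a tilting `A`-module, `B = End_A(T)`, and
`0 → M → X' →(p) N → 0` a short exact sequence in `mod A` with `Ext¹_A(N,T) = 0`.
Let `L ∈ mod A` with `Ext¹_A(L,M) = 0`. If `θ_{L,X'}` and `θ_{L,N}` are bijective, then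
composition with `p_T = Hom_A(p,T) : N_T → X'_T` gives a surjection
`Hom_B(X'_T, L_T) → Hom_B(N_T, L_T)`. -/
theorem stmt_3 (k : Type) [Field k] (A : Type) [Ring A] [Algebra k A] [FiniteDimensional k A]
    (hAbasic : IsBasic A A) (hAconn : IsConnectedRing A)
    (T : Type) [AddCommGroup T] [Module A T] [Module.Finite A T]
    (hT : IsTilting A T)
    (M : Type) [AddCommGroup M] [Module A M] [Module.Finite A M]
    (X' : Type) [AddCommGroup X'] [Module A X'] [Module.Finite A X']
    (N : Type) [AddCommGroup N] [Module A N] [Module.Finite A N]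
    (L : Type) [AddCommGroup L] [Module A L] [Module.Finite A L]
    (i : M →ₗ[A] X') (p : X' →ₗ[A] N)
    (hi : Function.Injective i) (hp : Function.Surjective p) (hip : Function.Exact i p)
    (hextN : ExtVanish A 1 (ModuleCat.of A N) (ModuleCat.of A T))
    (hextL : ExtVanish A 1 (ModuleCat.of A L) (ModuleCat.of A M))
    (h1 : Function.Bijective (thetaMap A T L X'))
    (h2 : Function.Bijective (thetaMap A T L N)) :
    Function.Surjective (fun f : (X' →ₗ[A] T) →ₗ[Module.End A T] (L →ₗ[A] T) =>
      f.comp (thetaMap A T X' N p)) := by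
  intro g
  obtain ⟨v, hv⟩ := h2.2 g
  obtain ⟨u, hu⟩ := lift_of_extvanish A M X' N L i p hi hp hip hextL v
  refine ⟨thetaMap A T L X' u, ?_⟩
  apply LinearMap.ext
  intro h
  show (h.comp p).comp u = g h
  rw [LinearMap.comp_assoc, hu, ← hv]
  rfl
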